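/- arXiv:1808.03245 — 3 statements merged into one kernel-verified Lean document; each statement's English description precedes it below -/
import Mathlib

section
/- With Θ_{A₂^∨,(0,0)}(x,y) = Σ_{(m,n)∈ℤ²} x^{2(m²+mn+n²)} y^{m+n} and Θ_{A₂^∨,(0,1)}(x,y) = Σ_{(m,n)∈ℤ²} ε^{m−n} x^{2(m²+mn+n²)} y^{m+n} where ε = e^{2πi/3}, and Θ_{A₂,(0,0)}, Θ_{A₂,(1,0)} as dictated by the A₂ lattice, one has the identity 2·Θ_{A₂^∨,(0,1)}(q^{1/6},y) = 3·Θ_{A₂,(0,0)}(q^{1/2},y) − Θ_{A₂^∨,(0,0)}(q^{1/6},y); equivalently Σ_{(m,n)} (2ε^{m−n}+1) q^{(m²+mn+n²)/3} y^{m+n} = 3 Σ_{(m,n)} q^{m²−mn+n²} y^{m+n}. -/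
open Filter

private lemma zpow_le_max_pow {t : ℝ} (ht : 0 < t) (s : ℤ) :
    t ^ s ≤ (max t t⁻¹) ^ s.natAbs := by
  rcases le_or_gt 0 s with h | h
  · lift s to ℕ using h
    rw [zpow_natCast, Int.natAbs_natCast]
    exact pow_le_pow_left₀ ht.le (le_max_left _ _) _
  · have hs : s = -(s.natAbs : ℤ) := by omega
    rw [hs, zpow_neg, ← inv_zpow, zpow_natCast, Int.natAbs_neg, Int.natAbs_natCast]
    exact pow_le_pow_left₀ (inv_nonneg.2 ht.le) (le_max_right _ _) _

private lemma coeff_eq {ε : ℂ} (hne : ε ≠ 0) (h3 : ε ^ (3 : ℕ) = 1)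
    (hs : 1 + ε + ε ^ 2 = 0) (k : ℤ) :
    (2 * ε ^ k + 1) + (2 * ε ^ (-k) + 1) = if (3 : ℤ) ∣ k then 6 else 0 := by
  have hmod : ∀ j : ℤ, ε ^ j = ε ^ (j % 3) := by
    intro j
    have : ε ^ j = ε ^ (3 * (j / 3) + j % 3) := by rw [Int.mul_ediv_add_emod]
    rw [this, zpow_add₀ hne, zpow_mul, show ((3:ℤ)) = ((3:ℕ):ℤ) by norm_num,
      zpow_natCast, h3, one_zpow, one_mul]
  rw [hmod k, hmod (-k)]
  have h0 : k % 3 = 0 ∨ k % 3 = 1 ∨ k % 3 = 2 := by omega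
  rcases h0 with h | h | h
  · rw [if_pos (by omega), h, show (-k) % 3 = 0 by omega]
    norm_num
  · rw [if_neg (by omega), h, show (-k) % 3 = 2 by omega]
    have e1 : ε ^ (1:ℤ) = ε := zpow_one ε
    have e2 : ε ^ (2:ℤ) = ε ^ (2:ℕ) := by exact_mod_cast zpow_natCast ε 2
    rw [e1, e2]
    linear_combination 2 * hs
  · rw [if_neg (by omega), h, show (-k) % 3 = 1 by omega]
    have e1 : ε ^ (1:ℤ) = ε := zpow_one ε
    have e2 : ε ^ (2:ℤ) = ε ^ (2:ℕ) := by exact_mod_cast zpow_natCast ε 2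
    rw [e1, e2]
    linear_combination 2 * hs

set_option maxHeartbeats 1000000 in
/-- With `ε = e^{2πi/3}`, the identity
`Σ (2ε^{m−n}+1) q^{(m²+mn+n²)/3} y^{m+n} = 3 Σ q^{m²−mn+n²} y^{m+n}`, written in the
variable `x = q^{1/6}`; equivalently
`2·Θ_{A₂^∨,(0,1)}(q^{1/6},y) = 3·Θ_{A₂,(0,0)}(q^{1/2},y) − Θ_{A₂^∨,(0,0)}(q^{1/6},y)`. -/
theorem stmt6 (x y : ℂ) (hx0 : x ≠ 0) (hx : ‖x‖ < 1) (hy : y ≠ 0) :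
    ∑' p : ℤ × ℤ,
      (2 * Complex.exp (2 * Real.pi * Complex.I / 3) ^ (p.1 - p.2) + 1) *
        x ^ (2 * (p.1 ^ 2 + p.1 * p.2 + p.2 ^ 2)) * y ^ (p.1 + p.2) =
    3 * ∑' p : ℤ × ℤ, x ^ (6 * (p.1 ^ 2 - p.1 * p.2 + p.2 ^ 2)) * y ^ (p.1 + p.2) := by
  have hform : 2 * (Real.pi : ℂ) * Complex.I / 3 = ((2 * Real.pi / 3 : ℝ) : ℂ) * Complex.I := by
    push_cast; ring
  set ε : ℂ := Complex.exp (2 * Real.pi * Complex.I / 3) with hεdef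
  have hεne : ε ≠ 0 := Complex.exp_ne_zero _
  have hε3 : ε ^ (3 : ℕ) = 1 := by
    rw [hεdef, ← Complex.exp_nat_mul, show (3:ℕ) * (2 * (Real.pi:ℂ) * Complex.I / 3)
      = 2 * Real.pi * Complex.I by push_cast; ring, Complex.exp_two_pi_mul_I]
  have hεre : ε.re = -(1/2) := by
    rw [hεdef, hform, Complex.exp_ofReal_mul_I_re,
      show 2 * Real.pi / 3 = Real.pi - Real.pi / 3 by ring, Real.cos_pi_sub,
      Real.cos_pi_div_three]
  have hεone : ε ≠ 1 := by
    intro h; rw [h] at hεre; norm_num at hεre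
  have hεs : 1 + ε + ε ^ 2 = 0 := by
    have hz : (ε - 1) * (1 + ε + ε ^ 2) = 0 := by linear_combination hε3
    rcases mul_eq_zero.1 hz with h | h
    · exact absurd (sub_eq_zero.1 h) hεone
    · exact h
  have hεnorm : ‖ε‖ = 1 := by
    rw [hεdef, hform, Complex.norm_exp_ofReal_mul_I]
  set f : ℤ × ℤ → ℂ := fun p =>
    (2 * ε ^ (p.1 - p.2) + 1) * x ^ (2 * (p.1 ^ 2 + p.1 * p.2 + p.2 ^ 2)) * y ^ (p.1 + p.2)
    with hfdef
  -- Summability of f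
  have hr0 : (0:ℝ) < ‖x‖ := norm_pos_iff.2 hx0
  set r : ℝ := ‖x‖ with hrdef
  set c : ℝ := max ‖y‖ ‖y‖⁻¹ with hcdef
  have hy0 : (0:ℝ) < ‖y‖ := norm_pos_iff.2 hy
  have hc1 : (1:ℝ) ≤ c := by
    rcases le_total ‖y‖ 1 with h | h
    · exact le_max_of_le_right ((one_le_inv₀ hy0).2 h)
    · exact le_max_of_le_left h
  have hc0 : (0:ℝ) < c := lt_of_lt_of_le one_pos hc1
  set a : ℤ → ℝ := fun m => r ^ m.natAbs ^ 2 * c ^ m.natAbs with hadef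
  have ha_nonneg : ∀ m, 0 ≤ a m := fun m => by positivity
  have hb : Summable (fun n : ℕ => r ^ n ^ 2 * c ^ n) := by
    apply Summable.of_norm_bounded_eventually (g := fun n : ℕ => r ^ n)
      (summable_geometric_of_lt_one hr0.le hx)
    rw [Nat.cofinite_eq_atTop]
    have htend : Tendsto (fun n : ℕ => r ^ n * c) atTop (nhds 0) := by
      have := (tendsto_pow_atTop_nhds_zero_of_lt_one hr0.le hx).mul_const c
      simpa using this
    filter_upwards [htend.eventually_lt_const hr0] with n hn
    have h1 : r ^ n ^ 2 * c ^ n = (r ^ n * c) ^ n := by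
      rw [mul_pow, ← pow_mul, sq]
    rw [Real.norm_eq_abs, abs_of_nonneg (by positivity), h1]
    exact pow_le_pow_left₀ (by positivity) hn.le n
  have hA : Summable a := by
    apply Summable.of_nat_of_neg
    · exact hb.congr fun n => by simp [hadef]
    · exact hb.congr fun n => by simp [hadef]
  have hprod : Summable (fun p : ℤ × ℤ => 3 * (a p.1 * a p.2)) :=
    (hA.mul_of_nonneg hA ha_nonneg ha_nonneg).mul_left 3
  have hbound : ∀ p : ℤ × ℤ, ‖f p‖ ≤ 3 * (a p.1 * a p.2) := by
    rintro ⟨m, n⟩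
    have hnc : ‖(2 * ε ^ (m - n) + 1 : ℂ)‖ ≤ 3 := by
      calc ‖(2 * ε ^ (m - n) + 1 : ℂ)‖ ≤ ‖(2:ℂ) * ε ^ (m - n)‖ + ‖(1:ℂ)‖ := norm_add_le _ _
        _ = 2 * ‖ε‖ ^ (m - n) + 1 := by rw [norm_mul, norm_zpow]; norm_num
        _ = 3 := by rw [hεnorm, one_zpow]; norm_num
    have hxb : ‖x ^ (2 * (m ^ 2 + m * n + n ^ 2))‖ ≤ r ^ m.natAbs ^ 2 * r ^ n.natAbs ^ 2 := by
      rw [norm_zpow]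
      have hle : ((m.natAbs ^ 2 + n.natAbs ^ 2 : ℕ) : ℤ) ≤ 2 * (m ^ 2 + m * n + n ^ 2) := by
        push_cast
        rw [sq_abs, sq_abs]
        nlinarith [sq_nonneg (m + n)]
      calc r ^ (2 * (m ^ 2 + m * n + n ^ 2)) ≤ r ^ ((m.natAbs ^ 2 + n.natAbs ^ 2 : ℕ) : ℤ) :=
            zpow_le_zpow_right_of_le_one₀ hr0 hx.le hle
        _ = r ^ m.natAbs ^ 2 * r ^ n.natAbs ^ 2 := by
            rw [zpow_natCast, pow_add]
    have hyb : ‖y ^ (m + n)‖ ≤ c ^ m.natAbs * c ^ n.natAbs := by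
      rw [norm_zpow]
      calc ‖y‖ ^ (m + n) ≤ c ^ (m + n).natAbs := zpow_le_max_pow hy0 (m + n)
        _ ≤ c ^ (m.natAbs + n.natAbs) := pow_le_pow_right₀ hc1 (Int.natAbs_add_le m n)
        _ = c ^ m.natAbs * c ^ n.natAbs := pow_add c _ _
    have : ‖f (m, n)‖ = ‖(2 * ε ^ (m - n) + 1 : ℂ)‖ * ‖x ^ (2 * (m ^ 2 + m * n + n ^ 2))‖ *
        ‖y ^ (m + n)‖ := by
      rw [hfdef]; simp [norm_mul]
    rw [this]
    have hgoal : 3 * (a m * a n) =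
        3 * (r ^ m.natAbs ^ 2 * r ^ n.natAbs ^ 2) * (c ^ m.natAbs * c ^ n.natAbs) := by
      rw [hadef]; ring
    rw [hgoal]
    have h1 : (0:ℝ) ≤ ‖x ^ (2 * (m ^ 2 + m * n + n ^ 2))‖ := norm_nonneg _
    have h2 : (0:ℝ) ≤ ‖y ^ (m + n)‖ := norm_nonneg _
    apply mul_le_mul _ hyb h2 (by positivity)
    exact mul_le_mul hnc hxb h1 (by norm_num)
  have hsum : Summable f := Summable.of_norm_bounded hprod hbound
  have hswap : Summable (fun p : ℤ × ℤ => f p.swap) :=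
    (Equiv.prodComm ℤ ℤ).summable_iff.2 hsum
  -- the doubled sum
  set S : ℂ := ∑' p : ℤ × ℤ, x ^ (6 * (p.1 ^ 2 - p.1 * p.2 + p.2 ^ 2)) * y ^ (p.1 + p.2)
    with hSdef
  set F : ℤ × ℤ → ℤ × ℤ := fun p => (2 * p.1 - p.2, 2 * p.2 - p.1) with hFdef
  have hFinj : Function.Injective F := by
    rintro ⟨a1, a2⟩ ⟨b1, b2⟩ h
    rw [hFdef, Prod.mk.injEq] at h
    obtain ⟨h1, h2⟩ := h
    have : a1 = b1 ∧ a2 = b2 := by omega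
    exact Prod.ext this.1 this.2
  have hsupp : Function.support (fun p : ℤ × ℤ => f p + f p.swap) ⊆ Set.range F := by
    rintro ⟨m, n⟩ hp
    by_contra hnr
    apply hp
    have hdvd : ¬ (3:ℤ) ∣ (m - n) := by
      intro ⟨d, hd⟩
      exact hnr ⟨(n + 2 * d, n + d), by rw [hFdef]; exact Prod.ext (by dsimp; omega) (by dsimp; omega)⟩
    have hc := coeff_eq hεne hε3 hεs (m - n)
    rw [if_neg hdvd] at hc
    show f (m, n) + f (n, m) = 0
    rw [hfdef]
    dsimp only
    have e1 : n - m = -(m - n) := by ring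
    have e2 : 2 * (n ^ 2 + n * m + m ^ 2) = 2 * (m ^ 2 + m * n + n ^ 2) := by ring
    have e3 : n + m = m + n := by ring
    rw [e1, e2, e3]
    linear_combination (x ^ (2 * (m ^ 2 + m * n + n ^ 2)) * y ^ (m + n)) * hc
  have hFval : ∀ p : ℤ × ℤ, f (F p) + f (F p).swap =
      6 * (x ^ (6 * (p.1 ^ 2 - p.1 * p.2 + p.2 ^ 2)) * y ^ (p.1 + p.2)) := by
    rintro ⟨a1, a2⟩
    rw [hfdef, hFdef]
    dsimp only
    simp only [Prod.swap_prod_mk]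
    have e1 : 2 * a1 - a2 - (2 * a2 - a1) = 3 * (a1 - a2) := by ring
    have e2 : 2 * a2 - a1 - (2 * a1 - a2) = -(3 * (a1 - a2)) := by ring
    have e3 : 2 * ((2 * a1 - a2) ^ 2 + (2 * a1 - a2) * (2 * a2 - a1) + (2 * a2 - a1) ^ 2)
        = 6 * (a1 ^ 2 - a1 * a2 + a2 ^ 2) := by ring
    have e4 : 2 * ((2 * a2 - a1) ^ 2 + (2 * a2 - a1) * (2 * a1 - a2) + (2 * a1 - a2) ^ 2)
        = 6 * (a1 ^ 2 - a1 * a2 + a2 ^ 2) := by ring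
    have e5 : 2 * a1 - a2 + (2 * a2 - a1) = a1 + a2 := by ring
    have e6 : 2 * a2 - a1 + (2 * a1 - a2) = a1 + a2 := by ring
    rw [e1, e2, e3, e4, e5, e6]
    have hc := coeff_eq hεne hε3 hεs (3 * (a1 - a2))
    rw [if_pos ⟨a1 - a2, rfl⟩] at hc
    linear_combination (x ^ (6 * (a1 ^ 2 - a1 * a2 + a2 ^ 2)) * y ^ (a1 + a2)) * hc
  have key : (∑' p : ℤ × ℤ, f p) + (∑' p : ℤ × ℤ, f p) = 6 * S := by
    have step1 : (∑' p : ℤ × ℤ, f p) = ∑' p : ℤ × ℤ, f p.swap :=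
      ((Equiv.prodComm ℤ ℤ).tsum_eq f).symm
    calc (∑' p : ℤ × ℤ, f p) + (∑' p : ℤ × ℤ, f p)
        = (∑' p : ℤ × ℤ, f p) + ∑' p : ℤ × ℤ, f p.swap := by rw [← step1]
      _ = ∑' p : ℤ × ℤ, (f p + f p.swap) := (Summable.tsum_add hsum hswap).symm
      _ = ∑' p : ℤ × ℤ, (f (F p) + f (F p).swap) := (hFinj.tsum_eq hsupp).symm
      _ = ∑' p : ℤ × ℤ, 6 * (x ^ (6 * (p.1 ^ 2 - p.1 * p.2 + p.2 ^ 2)) * y ^ (p.1 + p.2)) :=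
          tsum_congr hFval
      _ = 6 * S := by rw [tsum_mul_left]
  show (∑' p : ℤ × ℤ, f p) = 3 * S
  linear_combination key / 2
end

section
/- Let ε = e^{2πi/3}. Substituting x ↦ εx in Θ_{A₂^∨,(0,0)}(x,y) = Σ_{(m,n)∈ℤ²} x^{2(m²+mn+n²)} y^{m+n} yields Θ_{A₂^∨,(0,0)}(εx,y) = (2+ε)·Θ_{A₂,(0,0)}(x³,y) − (1+ε)·Θ_{A₂^∨,(0,0)}(x,y), where Θ_{A₂,(0,0)}(x³,y) = Σ_{(m,n)∈ℤ²} x^{6(m²−mn+n²)} y^{m+n}. -/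
open Complex Function

local notation "ε" => Complex.exp (2 * Real.pi * Complex.I / 3)

private lemma eps_ne_zero : ε ≠ 0 := Complex.exp_ne_zero _

private lemma eps_cube : ε ^ (3 : ℕ) = 1 := by
  rw [← Complex.exp_nat_mul]
  rw [show (3 : ℕ) * (2 * Real.pi * Complex.I / 3) = 2 * Real.pi * Complex.I by
    push_cast; ring]
  exact Complex.exp_two_pi_mul_I

private lemma eps_ne_one : ε ≠ 1 := by
  intro h
  rw [Complex.exp_eq_one_iff] at h
  obtain ⟨n, hn⟩ := h
  have hπ : (Real.pi : ℂ) ≠ 0 := by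
    exact_mod_cast Real.pi_ne_zero
  have hI : Complex.I ≠ 0 := Complex.I_ne_zero
  have h2 : (2 : ℂ) * Real.pi * Complex.I ≠ 0 := by
    simp [hπ, hI]
  have h0 : ((1 : ℂ) - 3 * n) * (2 * Real.pi * Complex.I) = 0 := by
    linear_combination 3 * hn
  rcases mul_eq_zero.1 h0 with h1 | h1
  · have h3 : (3 * n : ℤ) = 1 := by
      have : (3 : ℂ) * n = 1 := by linear_combination -h1
      exact_mod_cast this
    omega
  · exact h2 h1

private lemma eps_sq : ε ^ (2 : ℕ) = -1 - ε := by
  have h : (ε - 1) * (ε ^ 2 + ε + 1) = 0 := by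
    have h3 := eps_cube
    linear_combination h3
  rcases mul_eq_zero.1 h with h1 | h2
  · exact absurd (sub_eq_zero.1 h1) eps_ne_one
  · linear_combination h2

private lemma eps_zpow_three : ε ^ (3 : ℤ) = 1 := by
  rw [show (3 : ℤ) = ((3 : ℕ) : ℤ) from rfl, zpow_natCast]
  exact eps_cube

private lemma eps_zpow_three_mul (t : ℤ) : ε ^ (3 * t) = 1 := by
  rw [zpow_mul, eps_zpow_three, one_zpow]

private lemma eps_pow_key (m n : ℤ) :
    ε ^ (2 * (m ^ 2 + m * n + n ^ 2)) =
      if (3 : ℤ) ∣ (m - n) then 1 else (-1 - ε) := by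
  by_cases hd : (3 : ℤ) ∣ (m - n)
  · obtain ⟨c, hc⟩ := hd
    rw [if_pos ⟨c, hc⟩]
    have hm : m = n + 3 * c := by omega
    have he : 2 * (m ^ 2 + m * n + n ^ 2) = 3 * (2 * n ^ 2 + 6 * n * c + 6 * c ^ 2) := by
      rw [hm]; ring
    rw [he, eps_zpow_three_mul]
  · rw [if_neg hd]
    have h1 : (m - n) % 3 = 1 ∨ (m - n) % 3 = 2 := by omega
    set q := (m - n) / 3 with hq
    have he : ∃ t : ℤ, 2 * (m ^ 2 + m * n + n ^ 2) = 3 * t + 2 := by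
      rcases h1 with h | h
      · have hmn : m - n = 3 * q + 1 := by omega
        have hm : m = n + 3 * q + 1 := by omega
        exact ⟨2 * n ^ 2 + 2 * n * (3 * q + 1) + 6 * q ^ 2 + 4 * q, by rw [hm]; ring⟩
      · have hm : m = n + 3 * q + 2 := by omega
        exact ⟨2 * n ^ 2 + 2 * n * (3 * q + 2) + 6 * q ^ 2 + 8 * q + 2, by rw [hm]; ring⟩
    obtain ⟨t, ht⟩ := he
    rw [ht, zpow_add₀ eps_ne_zero, eps_zpow_three_mul, one_mul]
    rw [show (2 : ℤ) = ((2 : ℕ) : ℤ) by norm_num, zpow_natCast]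
    exact eps_sq

/-- Geometric-type summability over `ℤ`. -/
private lemma summable_q_natAbs {q : ℝ} (hq0 : 0 ≤ q) (hq1 : q < 1) :
    Summable (fun k : ℤ => q ^ k.natAbs) := by
  apply Summable.of_nat_of_neg
  · simpa using summable_geometric_of_lt_one hq0 hq1
  · simpa using summable_geometric_of_lt_one hq0 hq1

/-- Key summability: `∑ r^(k²) s^k` over `ℤ` for `0 < r < 1`, `0 < s`. -/
private lemma summable_A {r s : ℝ} (hr0 : 0 < r) (hr1 : r < 1) (hs : 0 < s) :
    Summable (fun k : ℤ => r ^ (k ^ 2) * s ^ k) := by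
  obtain ⟨N, hN⟩ := exists_pow_lt_of_lt_one (lt_min hs (inv_pos.2 hs)) hr1
  have hNs : r ^ N < s := lt_of_lt_of_le hN (min_le_left _ _)
  have hNsi : r ^ N < s⁻¹ := lt_of_lt_of_le hN (min_le_right _ _)
  set q : ℝ := max (r ^ N * s) (r ^ N * s⁻¹) with hqdef
  have hq0 : 0 ≤ q := le_trans (by positivity) (le_max_left _ _)
  have hq1 : q < 1 := by
    apply max_lt
    · calc r ^ N * s < s⁻¹ * s := by
            exact mul_lt_mul_of_pos_right hNsi hs
        _ = 1 := inv_mul_cancel₀ hs.ne'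
    · calc r ^ N * s⁻¹ < s * s⁻¹ := mul_lt_mul_of_pos_right hNs (inv_pos.2 hs)
        _ = 1 := mul_inv_cancel₀ hs.ne'
  apply Summable.of_norm_bounded_eventually (g := fun k : ℤ => q ^ k.natAbs)
    (summable_q_natAbs hq0 hq1)
  have hbound : ∀ k : ℤ, N ≤ k.natAbs →
      ‖r ^ (k ^ 2) * s ^ k‖ ≤ q ^ k.natAbs := by
    intro k hk
    set a : ℕ := k.natAbs with ha
    have hpos : 0 < r ^ (k ^ 2) * s ^ k := by positivity
    rw [Real.norm_eq_abs, abs_of_pos hpos]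
    have hk2 : k ^ 2 = ((a ^ 2 : ℕ) : ℤ) := by
      rw [ha]; push_cast; rw [_root_.sq_abs]
    have hNa : N * a ≤ a ^ 2 := by nlinarith
    have h1 : r ^ (k ^ 2) ≤ (r ^ N) ^ a := by
      rw [hk2, zpow_natCast, ← pow_mul]
      exact pow_le_pow_of_le_one hr0.le hr1.le hNa
    rcases le_or_gt 0 k with hk0 | hk0
    · have hka : k = (a : ℤ) := by rw [ha]; omega
      have h2 : s ^ k = s ^ a := by rw [hka, zpow_natCast]
      calc r ^ (k ^ 2) * s ^ k ≤ (r ^ N) ^ a * s ^ a := by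
            rw [h2]; exact mul_le_mul_of_nonneg_right h1 (by positivity)
        _ = (r ^ N * s) ^ a := (mul_pow _ _ _).symm
        _ ≤ q ^ a := pow_le_pow_left₀ (by positivity) (le_max_left _ _) a
    · have hka : k = -(a : ℤ) := by rw [ha]; omega
      have h2 : s ^ k = (s⁻¹) ^ a := by
        rw [hka, zpow_neg, zpow_natCast, ← inv_pow]
      calc r ^ (k ^ 2) * s ^ k ≤ (r ^ N) ^ a * (s⁻¹) ^ a := by
            rw [h2]; exact mul_le_mul_of_nonneg_right h1 (by positivity)
        _ = (r ^ N * s⁻¹) ^ a := (mul_pow _ _ _).symm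
        _ ≤ q ^ a := pow_le_pow_left₀ (by positivity) (le_max_right _ _) a
  rw [Filter.eventually_cofinite]
  apply Set.Finite.subset (Set.finite_Icc (-(N : ℤ)) (N : ℤ))
  intro k hk
  simp only [Set.mem_setOf_eq] at hk
  by_contra hmem
  simp only [Set.mem_Icc, not_and_or, not_le] at hmem
  have : N ≤ k.natAbs := by omega
  exact hk (hbound k this)

private lemma summable_B {r : ℝ} (hr0 : 0 < r) (hr1 : r < 1) :
    Summable (fun k : ℤ => r ^ (k ^ 2)) := by
  have := summable_A hr0 hr1 (s := 1) one_pos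
  simpa using this

/-- Summability of the norms of the theta terms. -/
private lemma summable_norm_f {x y : ℂ} (hx0 : x ≠ 0) (hx : ‖x‖ < 1) (hy : y ≠ 0) :
    Summable (fun p : ℤ × ℤ =>
      ‖x ^ (2 * (p.1 ^ 2 + p.1 * p.2 + p.2 ^ 2)) * y ^ (p.1 + p.2)‖) := by
  set r := ‖x‖ with hr
  set s := ‖y‖ with hs
  have hr0 : 0 < r := norm_pos_iff.2 hx0
  have hs0 : 0 < s := norm_pos_iff.2 hy
  have hA := summable_A hr0 hx hs0
  have hB := summable_B hr0 hx
  set C := ∑' k : ℤ, r ^ (k ^ 2) * s ^ k with hC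
  have hCle : ∀ k : ℤ, r ^ (k ^ 2) * s ^ k ≤ C :=
    fun k => Summable.le_tsum hA k (fun j _ => by positivity)
  have hprod : Summable (fun p : ℤ × ℤ => C * (r ^ (p.1 ^ 2) * r ^ (p.2 ^ 2))) :=
    (hB.mul_of_nonneg hB (fun k => by positivity) (fun k => by positivity)).mul_left C
  apply Summable.of_nonneg_of_le (fun p => norm_nonneg _) _ hprod
  intro p
  obtain ⟨m, n⟩ := p
  have hnorm : ‖x ^ (2 * (m ^ 2 + m * n + n ^ 2)) * y ^ (m + n)‖ =
      (r ^ ((m + n) ^ 2) * s ^ (m + n)) * (r ^ (m ^ 2) * r ^ (n ^ 2)) := by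
    rw [norm_mul, norm_zpow, norm_zpow, ← hr, ← hs]
    rw [show 2 * (m ^ 2 + m * n + n ^ 2) = (m + n) ^ 2 + (m ^ 2 + n ^ 2) by ring]
    rw [zpow_add₀ hr0.ne', zpow_add₀ hr0.ne']
    ring
  rw [hnorm]
  exact mul_le_mul_of_nonneg_right (hCle (m + n)) (by positivity)

/-- With `ε = e^{2πi/3}`, substituting `x ↦ εx` into
`Θ_{A₂^∨,(0,0)}(x,y) = Σ x^{2(m²+mn+n²)} y^{m+n}` gives
`Θ_{A₂^∨,(0,0)}(εx,y) = (2+ε)·Θ_{A₂,(0,0)}(x³,y) − (1+ε)·Θ_{A₂^∨,(0,0)}(x,y)`. -/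
theorem stmt7 (x y : ℂ) (hx0 : x ≠ 0) (hx : ‖x‖ < 1) (hy : y ≠ 0) :
    ∑' p : ℤ × ℤ,
      (Complex.exp (2 * Real.pi * Complex.I / 3) * x) ^ (2 * (p.1 ^ 2 + p.1 * p.2 + p.2 ^ 2)) *
        y ^ (p.1 + p.2) =
    (2 + Complex.exp (2 * Real.pi * Complex.I / 3)) *
      ∑' p : ℤ × ℤ, x ^ (6 * (p.1 ^ 2 - p.1 * p.2 + p.2 ^ 2)) * y ^ (p.1 + p.2) -
    (1 + Complex.exp (2 * Real.pi * Complex.I / 3)) *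
      ∑' p : ℤ × ℤ, x ^ (2 * (p.1 ^ 2 + p.1 * p.2 + p.2 ^ 2)) * y ^ (p.1 + p.2) := by
  set f : ℤ × ℤ → ℂ :=
    fun p => x ^ (2 * (p.1 ^ 2 + p.1 * p.2 + p.2 ^ 2)) * y ^ (p.1 + p.2) with hfdef
  set g : ℤ × ℤ → ℂ :=
    fun p => if (3 : ℤ) ∣ (p.1 - p.2) then f p else 0 with hgdef
  have hnf := summable_norm_f hx0 hx hy
  have hf : Summable f := hnf.of_norm
  have hg : Summable g := by
    apply Summable.of_norm_bounded hnf
    intro p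
    rw [hgdef]
    dsimp only
    split_ifs with h
    · exact le_refl _
    · rw [norm_zero]; positivity
  -- Step 1: termwise identity for the left-hand side
  have step1 : ∀ p : ℤ × ℤ,
      (ε * x) ^ (2 * (p.1 ^ 2 + p.1 * p.2 + p.2 ^ 2)) * y ^ (p.1 + p.2) =
        (2 + ε) * g p - (1 + ε) * f p := by
    intro p
    obtain ⟨m, n⟩ := p
    rw [mul_zpow, eps_pow_key m n, hgdef, hfdef]
    dsimp only
    split_ifs with h
    · ring
    · ring
  -- Step 3: reindexing the divisible part
  have step3 : ∑' p : ℤ × ℤ, g p =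
      ∑' p : ℤ × ℤ, x ^ (6 * (p.1 ^ 2 - p.1 * p.2 + p.2 ^ 2)) * y ^ (p.1 + p.2) := by
    set ι : ℤ × ℤ → ℤ × ℤ := fun p => (2 * p.1 - p.2, 2 * p.2 - p.1) with hι
    have hinj : Function.Injective ι := by
      intro a b h
      rw [hι] at h
      simp only [Prod.mk.injEq] at h
      have := Prod.ext_iff.1 (rfl : a = a)
      obtain ⟨h1, h2⟩ := h
      exact Prod.ext_iff.2 ⟨by omega, by omega⟩
    have hsupp : Function.support g ⊆ Set.range ι := by
      intro p hp
      have hdvd : (3 : ℤ) ∣ (p.1 - p.2) := by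
        by_contra h
        apply hp
        rw [hgdef]
        simp [h]
      obtain ⟨c, hc⟩ := hdvd
      exact ⟨(p.2 + 2 * c, p.2 + c), by
        rw [hι]; exact Prod.ext_iff.2 ⟨by dsimp; omega, by dsimp; omega⟩⟩
    rw [← hinj.tsum_eq hsupp]
    apply tsum_congr
    intro p
    obtain ⟨a, b⟩ := p
    rw [hgdef, hι]
    dsimp only
    have hcond : (3 : ℤ) ∣ (2 * a - b - (2 * b - a)) := ⟨a - b, by ring⟩
    rw [if_pos hcond, hfdef]
    dsimp only
    rw [show 2 * ((2 * a - b) ^ 2 + (2 * a - b) * (2 * b - a) + (2 * b - a) ^ 2) =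
      6 * (a ^ 2 - a * b + b ^ 2) by ring]
    rw [show 2 * a - b + (2 * b - a) = a + b by ring]
  calc ∑' p : ℤ × ℤ,
      (ε * x) ^ (2 * (p.1 ^ 2 + p.1 * p.2 + p.2 ^ 2)) * y ^ (p.1 + p.2)
      = ∑' p : ℤ × ℤ, ((2 + ε) * g p - (1 + ε) * f p) := tsum_congr step1
    _ = (2 + ε) * ∑' p, g p - (1 + ε) * ∑' p, f p := by
        rw [Summable.tsum_sub (hg.mul_left _) (hf.mul_left _), tsum_mul_left, tsum_mul_left]
    _ = _ := by rw [step3]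
end

section
/- Define Z(x,y) = Θ_{A₂^∨,(0,0)}(x,y)/Θ_{A₂^∨,(0,1)}(x,y) and W(x,y) = Θ_{A₂,(0,0)}(x,y)/Θ_{A₂,(1,0)}(x,y) as ratios of the theta series defined above (viewed as formal Laurent/Puiseux series in x over ℚ(y) or as meromorphic functions). Then W(x³,y) = (Z(x,y)+2)/(Z(x,y)−1). -/
open Filter

private lemma summable_nat_aux {r M : ℝ} (hr0 : 0 < r) (hr1 : r < 1) (hM : 1 ≤ M) (c : ℤ) :
    Summable (fun n : ℕ => r ^ (3 * (n : ℤ) ^ 2 + c * (n : ℤ)) * M ^ n) := by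
  have hrne : r ≠ 0 := hr0.ne'
  apply summable_of_ratio_norm_eventually_le (r := 1 / 2) (by norm_num)
  have h6 : Tendsto (fun n : ℕ => (r ^ 6) ^ n * (r ^ ((3 : ℤ) + c) * M)) atTop (nhds 0) := by
    simpa using (tendsto_pow_atTop_nhds_zero_of_lt_one
      (by positivity) (by nlinarith [pow_lt_one₀ (le_of_lt hr0) hr1 (by norm_num : (6:ℕ) ≠ 0)] :
        r ^ 6 < 1)).mul_const (r ^ ((3 : ℤ) + c) * M)
  filter_upwards [h6.eventually_le_const (by norm_num : (0:ℝ) < 1/2)] with n hn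
  have hpos : (0:ℝ) ≤ r ^ (3 * (n : ℤ) ^ 2 + c * (n : ℤ)) * M ^ n := by positivity
  rw [Real.norm_of_nonneg (by positivity), Real.norm_of_nonneg hpos]
  have key : r ^ (3 * ((n:ℕ)+1 : ℤ) ^ 2 + c * ((n:ℕ)+1 : ℤ)) * M ^ (n + 1)
      = ((r ^ 6) ^ n * (r ^ ((3 : ℤ) + c) * M)) * (r ^ (3 * (n : ℤ) ^ 2 + c * (n : ℤ)) * M ^ n) := by
    rw [pow_succ M n]
    rw [show (3 * ((n:ℕ)+1 : ℤ) ^ 2 + c * ((n:ℕ)+1 : ℤ))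
        = 6 * (n : ℤ) + (((3 : ℤ) + c) + (3 * (n : ℤ) ^ 2 + c * (n : ℤ))) by push_cast; ring]
    rw [zpow_add₀ hrne, zpow_add₀ hrne]
    rw [show (6 * (n : ℤ)) = ((6 : ℕ) : ℤ) * ((n : ℕ) : ℤ) by push_cast; ring]
    rw [zpow_mul, zpow_natCast, zpow_natCast]
    ring
  push_cast at key ⊢
  rw [key]
  exact mul_le_mul_of_nonneg_right hn hpos

private lemma summable_int_aux {r M : ℝ} (hr0 : 0 < r) (hr1 : r < 1) (hM : 1 ≤ M) (c d : ℤ) :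
    Summable (fun n : ℤ => r ^ (3 * n ^ 2 + c * n + d) * M ^ n.natAbs) := by
  have hrne : r ≠ 0 := hr0.ne'
  have : (fun n : ℤ => r ^ (3 * n ^ 2 + c * n + d) * M ^ n.natAbs)
      = fun n : ℤ => r ^ d * (r ^ (3 * n ^ 2 + c * n) * M ^ n.natAbs) := by
    funext n; rw [zpow_add₀ hrne]; ring
  rw [this]
  apply Summable.mul_left
  apply Summable.of_nat_of_neg
  · exact (summable_nat_aux hr0 hr1 hM c).congr (by intro n; simp)
  · refine (summable_nat_aux hr0 hr1 hM (-c)).congr (fun n => ?_)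
    have h1 : (3 * (-(n:ℤ)) ^ 2 + (-(n:ℤ)) * c) = 3 * (n:ℤ)^2 + (-c) * (n:ℤ) := by ring
    simp only [Int.natAbs_neg, Int.natAbs_natCast]
    rw [show (3 * (-(n:ℤ)) ^ 2 + c * (-(n:ℤ))) = 3 * (n:ℤ)^2 + (-c) * (n:ℤ) by ring]

private lemma norm_zpow_le_max {y : ℂ} (hy : y ≠ 0) (s : ℤ) :
    ‖y ^ s‖ ≤ (max ‖y‖ ‖y‖⁻¹) ^ s.natAbs := by
  rw [norm_zpow]
  rcases le_or_gt 0 s with h | h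
  · rw [show s = (s.natAbs : ℤ) by omega, zpow_natCast]
    exact pow_le_pow_left₀ (norm_nonneg y) (le_max_left _ _) _
  · obtain ⟨k, rfl⟩ : ∃ k : ℕ, s = -(k : ℤ) := ⟨s.natAbs, by omega⟩
    rw [zpow_neg, zpow_natCast, ← inv_pow, Int.natAbs_neg, Int.natAbs_natCast]
    exact pow_le_pow_left₀ (inv_nonneg.2 (norm_nonneg y)) (le_max_right _ _) _

private lemma summable_general {x y : ℂ} (hx0 : x ≠ 0) (hx : ‖x‖ < 1) (hy : y ≠ 0)
    {E : ℤ × ℤ → ℤ} (c1 d1 c2 d2 : ℤ)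
    (hE : ∀ p : ℤ × ℤ, 3 * p.1 ^ 2 + c1 * p.1 + d1 + (3 * p.2 ^ 2 + c2 * p.2 + d2) ≤ E p) :
    Summable (fun p : ℤ × ℤ => x ^ (E p) * y ^ (p.1 + p.2)) := by
  set r := ‖x‖ with hr
  have hr0 : 0 < r := norm_pos_iff.2 hx0
  set M := max ‖y‖ ‖y‖⁻¹ with hMdef
  have hM : 1 ≤ M := by
    rcases le_or_gt 1 ‖y‖ with h | h
    · exact le_max_of_le_left h
    · exact le_max_of_le_right ((one_le_inv₀ (norm_pos_iff.2 hy)).2 h.le)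
  have hs1 := summable_int_aux hr0 hx hM c1 d1
  have hs2 := summable_int_aux hr0 hx hM c2 d2
  apply Summable.of_norm_bounded
    (hs1.mul_of_nonneg hs2 (fun n => by positivity) (fun n => by positivity))
  rintro ⟨a, b⟩
  calc ‖x ^ (E (a, b)) * y ^ (a + b)‖ = r ^ (E (a, b)) * ‖y ^ (a + b)‖ := by
        rw [norm_mul, norm_zpow]
    _ ≤ r ^ (3 * a ^ 2 + c1 * a + d1 + (3 * b ^ 2 + c2 * b + d2)) * M ^ (a + b).natAbs := by
        apply mul_le_mul _ (norm_zpow_le_max hy _) (norm_nonneg _) (by positivity)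
        exact zpow_le_zpow_right_of_le_one₀ hr0 hx.le (hE (a, b))
    _ ≤ r ^ (3 * a ^ 2 + c1 * a + d1 + (3 * b ^ 2 + c2 * b + d2))
          * M ^ (a.natAbs + b.natAbs) := by
        apply mul_le_mul_of_nonneg_left _ (by positivity)
        exact pow_le_pow_right₀ hM (Int.natAbs_add_le a b)
    _ = (r ^ (3 * a ^ 2 + c1 * a + d1) * M ^ a.natAbs)
          * (r ^ (3 * b ^ 2 + c2 * b + d2) * M ^ b.natAbs) := by
        rw [zpow_add₀ hr0.ne', pow_add]; ring

private lemma hasSum_piece {f g : ℤ × ℤ → ℂ} {i : ℤ} {φ : ℤ × ℤ → ℤ × ℤ}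
    (hinj : Function.Injective φ)
    (hmem : ∀ p : ℤ × ℤ, (p.1 - p.2) % 3 = i → p ∈ Set.range φ)
    (hval : ∀ q : ℤ × ℤ, ((φ q).1 - (φ q).2) % 3 = i)
    (hcomp : ∀ q, f (φ q) = g q) {a : ℂ} (hg : HasSum g a) :
    HasSum (fun p : ℤ × ℤ => if (p.1 - p.2) % 3 = i then f p else 0) a := by
  rw [← hinj.hasSum_iff (f := fun p : ℤ × ℤ => if (p.1 - p.2) % 3 = i then f p else 0)
    (fun p hp => by rw [if_neg (fun h => hp (hmem p h))])]
  refine hg.congr_fun fun q => ?_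
  show (if (((φ q).1 - (φ q).2)) % 3 = i then f (φ q) else 0) = g q
  rw [if_pos (hval q), hcomp]

/-- `Z(x,y) = Θ_{A₂^∨,(0,0)}(x,y) / Θ_{A₂^∨,(0,1)}(x,y)`. -/
noncomputable def Zfun (x y : ℂ) : ℂ :=
  (∑' p : ℤ × ℤ, x ^ (2 * (p.1 ^ 2 + p.1 * p.2 + p.2 ^ 2)) * y ^ (p.1 + p.2)) /
  (∑' p : ℤ × ℤ, Complex.exp (2 * Real.pi * Complex.I / 3) ^ (p.1 - p.2) *
      x ^ (2 * (p.1 ^ 2 + p.1 * p.2 + p.2 ^ 2)) * y ^ (p.1 + p.2))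

/-- `W(x³,y) = Θ_{A₂,(0,0)}(x³,y) / Θ_{A₂,(1,0)}(x³,y)`, with the fractional
exponent cleared by writing everything in the variable `x`. -/
noncomputable def Wcube (x y : ℂ) : ℂ :=
  (∑' p : ℤ × ℤ, x ^ (6 * (p.1 ^ 2 - p.1 * p.2 + p.2 ^ 2)) * y ^ (p.1 + p.2)) /
  (∑' p : ℤ × ℤ, x ^ (6 * (p.1 ^ 2 - p.1 * p.2 + p.2 ^ 2 + p.1 - p.2) + 2) * y ^ (p.1 + p.2))

/-- The identity `W(x³,y) = (Z(x,y)+2)/(Z(x,y)−1)`. -/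
theorem stmt8 (x y : ℂ) (hx0 : x ≠ 0) (hx : ‖x‖ < 1) (hy : y ≠ 0)
    (hden1 : (∑' p : ℤ × ℤ, Complex.exp (2 * Real.pi * Complex.I / 3) ^ (p.1 - p.2) *
        x ^ (2 * (p.1 ^ 2 + p.1 * p.2 + p.2 ^ 2)) * y ^ (p.1 + p.2)) ≠ 0)
    (hden2 : (∑' p : ℤ × ℤ,
        x ^ (6 * (p.1 ^ 2 - p.1 * p.2 + p.2 ^ 2 + p.1 - p.2) + 2) * y ^ (p.1 + p.2)) ≠ 0)
    (hZ : Zfun x y ≠ 1) :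
    Wcube x y = (Zfun x y + 2) / (Zfun x y - 1) := by
  set ε : ℂ := Complex.exp (2 * Real.pi * Complex.I / 3) with hεdef
  -- basic facts about ε
  have hεne0 : ε ≠ 0 := Complex.exp_ne_zero _
  have hε3 : ε ^ (3 : ℕ) = 1 := by
    rw [hεdef, ← Complex.exp_nat_mul]
    rw [show ((3 : ℕ) : ℂ) * (2 * Real.pi * Complex.I / 3) = 2 * Real.pi * Complex.I by
      push_cast; ring]
    exact Complex.exp_two_pi_mul_I
  have hεone : ε ≠ 1 := by
    intro h
    rw [hεdef, Complex.exp_eq_one_iff] at h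
    obtain ⟨n, hn⟩ := h
    have hpi : (Real.pi : ℂ) ≠ 0 := by exact_mod_cast Real.pi_ne_zero
    have hne : 2 * (Real.pi : ℂ) * Complex.I ≠ 0 := by simp [hpi, Complex.I_ne_zero]
    field_simp at hn
    have h3 : (1 : ℂ) = 3 * n := by linear_combination hn
    have : (1 : ℤ) = 3 * n := by exact_mod_cast h3
    omega
  have hεsum : 1 + ε + ε ^ 2 = 0 := by
    have h0 : (ε - 1) * (1 + ε + ε ^ 2) = 0 := by linear_combination hε3
    rcases mul_eq_zero.1 h0 with h | h
    · exact absurd (sub_eq_zero.1 h) hεone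
    · exact h
  have hε3z : ε ^ (3 : ℤ) = 1 := by
    rw [show (3 : ℤ) = ((3 : ℕ) : ℤ) by norm_num, zpow_natCast, hε3]
  have hεz : ∀ k : ℤ, ε ^ (3 * k) = 1 := fun k => by rw [zpow_mul, hε3z, one_zpow]
  have hε2z : ε ^ (2 : ℤ) = ε ^ (2 : ℕ) := by
    rw [show (2 : ℤ) = ((2 : ℕ) : ℤ) by norm_num, zpow_natCast]
  -- summability of the two A₂-theta series
  have hsA : Summable (fun p : ℤ × ℤ =>
      x ^ (6 * (p.1 ^ 2 - p.1 * p.2 + p.2 ^ 2)) * y ^ (p.1 + p.2)) :=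
    summable_general hx0 hx hy (E := fun p => 6 * (p.1 ^ 2 - p.1 * p.2 + p.2 ^ 2)) 0 0 0 0
      (fun p => by nlinarith [sq_nonneg (p.1 - p.2)])
  have hsB : Summable (fun p : ℤ × ℤ =>
      x ^ (6 * (p.1 ^ 2 - p.1 * p.2 + p.2 ^ 2 + p.1 - p.2) + 2) * y ^ (p.1 + p.2)) :=
    summable_general hx0 hx hy
      (E := fun p => 6 * (p.1 ^ 2 - p.1 * p.2 + p.2 ^ 2 + p.1 - p.2) + 2) 6 1 (-6) 1
      (fun p => by nlinarith [sq_nonneg (p.1 - p.2)])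
  obtain ⟨A, hA⟩ := hsA
  obtain ⟨B, hB⟩ := hsB
  -- the three reindexing maps
  have inj0 : Function.Injective (fun q : ℤ × ℤ => ((2 * q.1 - q.2, 2 * q.2 - q.1) : ℤ × ℤ)) := by
    rintro ⟨a, b⟩ ⟨c, d⟩ h
    simp only [Prod.mk.injEq] at h ⊢
    omega
  have inj1 : Function.Injective
      (fun q : ℤ × ℤ => ((2 * q.2 - q.1 - 1, 2 * q.1 - q.2 + 1) : ℤ × ℤ)) := by
    rintro ⟨a, b⟩ ⟨c, d⟩ h
    simp only [Prod.mk.injEq] at h ⊢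
    omega
  have inj2 : Function.Injective
      (fun q : ℤ × ℤ => ((2 * q.1 - q.2 + 1, 2 * q.2 - q.1 - 1) : ℤ × ℤ)) := by
    rintro ⟨a, b⟩ ⟨c, d⟩ h
    simp only [Prod.mk.injEq] at h ⊢
    omega
  have mem0 : ∀ p : ℤ × ℤ, (p.1 - p.2) % 3 = 0 →
      p ∈ Set.range (fun q : ℤ × ℤ => ((2 * q.1 - q.2, 2 * q.2 - q.1) : ℤ × ℤ)) := by
    rintro ⟨m, n⟩ h
    exact ⟨((2 * m + n) / 3, (m + 2 * n) / 3), by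
      simp only [Prod.mk.injEq]; constructor <;> omega⟩
  have mem1 : ∀ p : ℤ × ℤ, (p.1 - p.2) % 3 = 1 →
      p ∈ Set.range (fun q : ℤ × ℤ => ((2 * q.2 - q.1 - 1, 2 * q.1 - q.2 + 1) : ℤ × ℤ)) := by
    rintro ⟨m, n⟩ h
    exact ⟨((m + 2 * n - 1) / 3, (2 * m + n + 1) / 3), by
      simp only [Prod.mk.injEq]; constructor <;> omega⟩
  have mem2 : ∀ p : ℤ × ℤ, (p.1 - p.2) % 3 = 2 →
      p ∈ Set.range (fun q : ℤ × ℤ => ((2 * q.1 - q.2 + 1, 2 * q.2 - q.1 - 1) : ℤ × ℤ)) := by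
    rintro ⟨m, n⟩ h
    exact ⟨((2 * m + n - 1) / 3, (m + 2 * n + 1) / 3), by
      simp only [Prod.mk.injEq]; constructor <;> omega⟩
  have val0 : ∀ q : ℤ × ℤ, (((2 * q.1 - q.2, 2 * q.2 - q.1) : ℤ × ℤ).1
      - ((2 * q.1 - q.2, 2 * q.2 - q.1) : ℤ × ℤ).2) % 3 = 0 := fun q => by simp only; omega
  have val1 : ∀ q : ℤ × ℤ, (((2 * q.2 - q.1 - 1, 2 * q.1 - q.2 + 1) : ℤ × ℤ).1
      - ((2 * q.2 - q.1 - 1, 2 * q.1 - q.2 + 1) : ℤ × ℤ).2) % 3 = 1 := fun q => by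
    simp only; omega
  have val2 : ∀ q : ℤ × ℤ, (((2 * q.1 - q.2 + 1, 2 * q.2 - q.1 - 1) : ℤ × ℤ).1
      - ((2 * q.1 - q.2 + 1, 2 * q.2 - q.1 - 1) : ℤ × ℤ).2) % 3 = 2 := fun q => by
    simp only; omega
  -- the C-series
  have hC : HasSum (fun p : ℤ × ℤ =>
      x ^ (2 * (p.1 ^ 2 + p.1 * p.2 + p.2 ^ 2)) * y ^ (p.1 + p.2)) (A + (B + B)) := by
    have h0 := hasSum_piece (f := fun p : ℤ × ℤ =>
        x ^ (2 * (p.1 ^ 2 + p.1 * p.2 + p.2 ^ 2)) * y ^ (p.1 + p.2)) inj0 mem0 val0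
      (fun q => by
        simp only
        rw [show 2 * ((2 * q.1 - q.2) ^ 2 + (2 * q.1 - q.2) * (2 * q.2 - q.1)
            + (2 * q.2 - q.1) ^ 2) = 6 * (q.1 ^ 2 - q.1 * q.2 + q.2 ^ 2) by ring,
          show 2 * q.1 - q.2 + (2 * q.2 - q.1) = q.1 + q.2 by ring]) hA
    have h1 := hasSum_piece (f := fun p : ℤ × ℤ =>
        x ^ (2 * (p.1 ^ 2 + p.1 * p.2 + p.2 ^ 2)) * y ^ (p.1 + p.2)) inj1 mem1 val1
      (fun q => by
        simp only
        rw [show 2 * ((2 * q.2 - q.1 - 1) ^ 2 + (2 * q.2 - q.1 - 1) * (2 * q.1 - q.2 + 1)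
            + (2 * q.1 - q.2 + 1) ^ 2)
            = 6 * (q.1 ^ 2 - q.1 * q.2 + q.2 ^ 2 + q.1 - q.2) + 2 by ring,
          show 2 * q.2 - q.1 - 1 + (2 * q.1 - q.2 + 1) = q.1 + q.2 by ring]) hB
    have h2 := hasSum_piece (f := fun p : ℤ × ℤ =>
        x ^ (2 * (p.1 ^ 2 + p.1 * p.2 + p.2 ^ 2)) * y ^ (p.1 + p.2)) inj2 mem2 val2
      (fun q => by
        simp only
        rw [show 2 * ((2 * q.1 - q.2 + 1) ^ 2 + (2 * q.1 - q.2 + 1) * (2 * q.2 - q.1 - 1)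
            + (2 * q.2 - q.1 - 1) ^ 2)
            = 6 * (q.1 ^ 2 - q.1 * q.2 + q.2 ^ 2 + q.1 - q.2) + 2 by ring,
          show 2 * q.1 - q.2 + 1 + (2 * q.2 - q.1 - 1) = q.1 + q.2 by ring]) hB
    refine (h0.add (h1.add h2)).congr_fun fun p => ?_
    have h : (p.1 - p.2) % 3 = 0 ∨ (p.1 - p.2) % 3 = 1 ∨ (p.1 - p.2) % 3 = 2 := by omega
    rcases h with h | h | h <;> simp [h]
  -- the D-series
  have hD : HasSum (fun p : ℤ × ℤ => ε ^ (p.1 - p.2) *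
      x ^ (2 * (p.1 ^ 2 + p.1 * p.2 + p.2 ^ 2)) * y ^ (p.1 + p.2))
      (A + (ε * B + ε ^ 2 * B)) := by
    have h0 := hasSum_piece (f := fun p : ℤ × ℤ => ε ^ (p.1 - p.2) *
        x ^ (2 * (p.1 ^ 2 + p.1 * p.2 + p.2 ^ 2)) * y ^ (p.1 + p.2)) inj0 mem0 val0
      (fun q => by
        simp only
        rw [show 2 * q.1 - q.2 - (2 * q.2 - q.1) = 3 * (q.1 - q.2) by ring, hεz, one_mul,
          show 2 * ((2 * q.1 - q.2) ^ 2 + (2 * q.1 - q.2) * (2 * q.2 - q.1)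
            + (2 * q.2 - q.1) ^ 2) = 6 * (q.1 ^ 2 - q.1 * q.2 + q.2 ^ 2) by ring,
          show 2 * q.1 - q.2 + (2 * q.2 - q.1) = q.1 + q.2 by ring]) hA
    have h1 := hasSum_piece (f := fun p : ℤ × ℤ => ε ^ (p.1 - p.2) *
        x ^ (2 * (p.1 ^ 2 + p.1 * p.2 + p.2 ^ 2)) * y ^ (p.1 + p.2)) inj1 mem1 val1
      (fun q => by
        simp only
        rw [show 2 * q.2 - q.1 - 1 - (2 * q.1 - q.2 + 1) = 3 * (q.2 - q.1 - 1) + 1 by ring,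
          zpow_add₀ hεne0, hεz, one_mul, zpow_one,
          show 2 * ((2 * q.2 - q.1 - 1) ^ 2 + (2 * q.2 - q.1 - 1) * (2 * q.1 - q.2 + 1)
            + (2 * q.1 - q.2 + 1) ^ 2)
            = 6 * (q.1 ^ 2 - q.1 * q.2 + q.2 ^ 2 + q.1 - q.2) + 2 by ring,
          show 2 * q.2 - q.1 - 1 + (2 * q.1 - q.2 + 1) = q.1 + q.2 by ring, mul_assoc])
      (hB.mul_left ε)
    have h2 := hasSum_piece (f := fun p : ℤ × ℤ => ε ^ (p.1 - p.2) *
        x ^ (2 * (p.1 ^ 2 + p.1 * p.2 + p.2 ^ 2)) * y ^ (p.1 + p.2)) inj2 mem2 val2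
      (fun q => by
        simp only
        rw [show 2 * q.1 - q.2 + 1 - (2 * q.2 - q.1 - 1) = 3 * (q.1 - q.2) + 2 by ring,
          zpow_add₀ hεne0, hεz, one_mul, hε2z,
          show 2 * ((2 * q.1 - q.2 + 1) ^ 2 + (2 * q.1 - q.2 + 1) * (2 * q.2 - q.1 - 1)
            + (2 * q.2 - q.1 - 1) ^ 2)
            = 6 * (q.1 ^ 2 - q.1 * q.2 + q.2 ^ 2 + q.1 - q.2) + 2 by ring,
          show 2 * q.1 - q.2 + 1 + (2 * q.2 - q.1 - 1) = q.1 + q.2 by ring, mul_assoc])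
      (hB.mul_left (ε ^ 2))
    refine (h0.add (h1.add h2)).congr_fun fun p => ?_
    have h : (p.1 - p.2) % 3 = 0 ∨ (p.1 - p.2) % 3 = 1 ∨ (p.1 - p.2) % 3 = 2 := by omega
    rcases h with h | h | h <;> simp [h]
  -- put everything together
  have hBne : B ≠ 0 := by rwa [hB.tsum_eq] at hden2
  have hkey : A + (ε * B + ε ^ 2 * B) = A - B := by linear_combination B * hεsum
  have hABne : A - B ≠ 0 := by
    rw [← hkey]; rwa [hD.tsum_eq] at hden1
  have hZeq : Zfun x y = (A + (B + B)) / (A - B) := by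
    rw [Zfun, ← hεdef, hC.tsum_eq, hD.tsum_eq, hkey]
  have hWeq : Wcube x y = A / B := by rw [Wcube, hA.tsum_eq, hB.tsum_eq]
  rw [hZeq] at hZ ⊢
  rw [hWeq]
  have hZ1 : (A + (B + B)) / (A - B) - 1 ≠ 0 := sub_ne_zero.2 hZ
  rw [div_sub_one hABne, div_add' _ _ _ hABne] at *
  field_simp
  rw [eq_div_iff (show A + B * (1 + 1) - (A - B) ≠ 0 by intro h; exact hBne (by linear_combination h / 3))]
  ring
end
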